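/- arXiv:2412.14767 — 6 statements merged into one kernel-verified Lean document; each statement's English description precedes it below -/
import Mathlib

section
/- Let n ≥ 2 be an integer, let R > 0, let K : [0, R] → ℝ be continuous, and let w : (0, R] → ℝ be differentiable and satisfy the Riccati inequality w'(t) + w(t)²/(n−1) + K(t) ≤ 0 for all t ∈ (0, R], together with the limit condition t²·w(t) → 0 as t → 0⁺. Then for every r ∈ (0, R] one has r²·w(r) ≤ (n−1)·r − ∫₀^r t²·K(t) dt. -/
open Set Filter MeasureTheory

/-- The Riccati comparison step: if `w` satisfies the Riccati inequality
`w' + w²/(n-1) + K ≤ 0` on `(0, R]` and `t² w(t) → 0` as `t → 0⁺`, then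
`r² w(r) ≤ (n-1) r - ∫₀ʳ t² K(t) dt` for all `r ∈ (0, R]`. -/
theorem riccati_comparison (n : ℕ) (hn : 2 ≤ n) (R : ℝ) (hR : 0 < R)
    (K w w' : ℝ → ℝ)
    (hK : ContinuousOn K (Icc 0 R))
    (hw : ∀ t ∈ Ioc (0 : ℝ) R, HasDerivAt w (w' t) t)
    (hRic : ∀ t ∈ Ioc (0 : ℝ) R, w' t + (w t) ^ 2 / ((n : ℝ) - 1) + K t ≤ 0)
    (hlim : Tendsto (fun t => t ^ 2 * w t) (nhdsWithin 0 (Ioi 0)) (nhds 0)) :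
    ∀ r ∈ Ioc (0 : ℝ) R,
      r ^ 2 * w r ≤ ((n : ℝ) - 1) * r - ∫ t in (0 : ℝ)..r, t ^ 2 * K t := by
  intro r hr
  set c : ℝ := (n : ℝ) - 1 with hcdef
  have hn2 : (2 : ℝ) ≤ (n : ℝ) := by exact_mod_cast hn
  have hc1 : (1 : ℝ) ≤ c := by simp only [hcdef]; linarith
  have hc0 : (0 : ℝ) < c := by linarith
  -- continuity of the integrand
  have hKc : ContinuousOn (fun t : ℝ => t ^ 2 * K t) (Icc 0 R) :=
    ((continuous_pow 2).continuousOn).mul hK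
  have hKcIoo : ContinuousOn (fun t : ℝ => t ^ 2 * K t) (Ioo 0 R) :=
    hKc.mono Ioo_subset_Icc_self
  have hmeas := hKcIoo.stronglyMeasurableAtFilter (μ := volume) isOpen_Ioo
  have hint : ∀ t ∈ Icc (0 : ℝ) R,
      IntervalIntegrable (fun s : ℝ => s ^ 2 * K s) volume 0 t := by
    intro t ht
    apply ContinuousOn.intervalIntegrable
    apply hKc.mono
    rw [uIcc_of_le ht.1]
    exact Icc_subset_Icc le_rfl ht.2
  set G : ℝ → ℝ := fun t => ∫ s in (0 : ℝ)..t, s ^ 2 * K s with hGdef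
  have hGcont : ContinuousOn G (Icc 0 R) := by
    have := intervalIntegral.continuousOn_primitive_interval (a := (0:ℝ)) (b := R)
      (μ := volume) (f := fun s : ℝ => s ^ 2 * K s)
      (hKc.mono (by rw [uIcc_of_le hR.le]) |>.integrableOn_compact
        (by rw [uIcc_of_le hR.le]; exact isCompact_Icc))
    rwa [uIcc_of_le hR.le] at this
  set F : ℝ → ℝ := fun t => c * t - G t - t ^ 2 * w t with hFdef
  -- derivative of F on Ioo 0 R
  have hF' : ∀ t ∈ Ioo (0 : ℝ) R,
      HasDerivAt F (c - t ^ 2 * K t - (2 * t * w t + t ^ 2 * w' t)) t := by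
    intro t ht
    have htIoc : t ∈ Ioc (0 : ℝ) R := ⟨ht.1, ht.2.le⟩
    have h1 : HasDerivAt (fun u : ℝ => c * u) c t := by
      simpa using (hasDerivAt_id t).const_mul c
    have h2 : HasDerivAt G (t ^ 2 * K t) t := by
      exact intervalIntegral.integral_hasDerivAt_right (hint t ⟨ht.1.le, ht.2.le⟩)
        (hmeas t ht) (hKcIoo.continuousAt (Ioo_mem_nhds ht.1 ht.2))
    have h3 : HasDerivAt (fun u : ℝ => u ^ 2 * w u) (2 * t * w t + t ^ 2 * w' t) t := by
      have := (hasDerivAt_pow 2 t).mul (hw t htIoc)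
      exact this.congr_deriv (by norm_num)
    exact (h1.sub h2).sub h3
  -- nonnegativity of the derivative
  have hF'nonneg : ∀ t ∈ Ioo (0 : ℝ) R,
      0 ≤ c - t ^ 2 * K t - (2 * t * w t + t ^ 2 * w' t) := by
    intro t ht
    have hric := hRic t ⟨ht.1, ht.2.le⟩
    have h1 : w' t * c + w t ^ 2 + K t * c ≤ 0 := by
      have h2 : w t ^ 2 / c * c = w t ^ 2 := div_mul_cancel₀ _ (ne_of_gt hc0)
      have h3 := mul_le_mul_of_nonneg_right hric hc0.le
      rw [hcdef] at *
      nlinarith [h2, h3]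
    have h4 := mul_le_mul_of_nonneg_left h1 (sq_nonneg t)
    nlinarith [sq_nonneg (t * w t - c), sq_nonneg t]
  -- monotonicity of F on [ε, r]
  have hmono : ∀ ε ∈ Ioo (0 : ℝ) r, F ε ≤ F r := by
    intro ε hε
    have hεr : ε ≤ r := hε.2.le
    have hsub : Icc ε r ⊆ Ioc 0 R := fun x hx => ⟨lt_of_lt_of_le hε.1 hx.1, hx.2.trans hr.2⟩
    have hsub' : Ioo ε r ⊆ Ioo 0 R := fun x hx => ⟨lt_trans hε.1 hx.1, lt_of_lt_of_le hx.2 hr.2⟩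
    have hFc : ContinuousOn F (Icc ε r) := by
      apply ContinuousOn.sub
      apply ContinuousOn.sub
      · exact (continuous_const.mul continuous_id).continuousOn
      · exact hGcont.mono fun x hx => ⟨(hsub hx).1.le, (hsub hx).2⟩
      · intro x hx
        exact (((hasDerivAt_pow 2 x).mul (hw x (hsub hx))).continuousAt).continuousWithinAt
    have := monotoneOn_of_deriv_nonneg (convex_Icc ε r) hFc
      (fun x hx => by
        rw [interior_Icc] at hx
        exact (hF' x (hsub' hx)).differentiableAt.differentiableWithinAt)
      (fun x hx => by
        rw [interior_Icc] at hx
        rw [(hF' x (hsub' hx)).deriv]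
        exact hF'nonneg x (hsub' hx))
    exact this (left_mem_Icc.2 hεr) (right_mem_Icc.2 hεr) hεr
  -- F ε → 0 as ε → 0⁺
  have hG0 : Tendsto G (nhdsWithin 0 (Ioi 0)) (nhds 0) := by
    have h0 : G 0 = 0 := by simp [hGdef]
    have := (hGcont 0 (left_mem_Icc.2 hR.le)).tendsto
    rw [h0] at this
    have hle : nhdsWithin (0:ℝ) (Ioi 0) ≤ nhdsWithin 0 (Icc 0 R) := by
      rw [← nhdsWithin_Ioc_eq_nhdsGT hR]
      exact nhdsWithin_mono _ Ioc_subset_Icc_self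
    exact this.mono_left hle
  have hFlim : Tendsto F (nhdsWithin 0 (Ioi 0)) (nhds 0) := by
    have h1 : Tendsto (fun ε : ℝ => c * ε) (nhdsWithin 0 (Ioi 0)) (nhds 0) := by
      have : Tendsto (fun ε : ℝ => c * ε) (nhds 0) (nhds (c * 0)) :=
        (continuous_const.mul continuous_id).tendsto 0
      rw [mul_zero] at this
      exact this.mono_left nhdsWithin_le_nhds
    have := (h1.sub hG0).sub hlim
    simpa using this
  have hev : ∀ᶠ ε in nhdsWithin (0:ℝ) (Ioi 0), F ε ≤ F r := by
    filter_upwards [Ioo_mem_nhdsGT_of_mem (left_mem_Ico.2 hr.1)] with ε hε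
    exact hmono ε hε
  have h0Fr : (0 : ℝ) ≤ F r := le_of_tendsto hFlim hev
  simp only [hFdef] at h0Fr
  linarith
end

section
/- Let R > 0, let K : [0, R] → ℝ be continuous, and let φ : (0, R] → ℝ be differentiable with φ(r) → 0 as r → 0⁺ and φ'(r) ≤ −(1/r²)·∫₀^r t²·K(t) dt for all r ∈ (0, R]. Then for every r ∈ (0, R] one has φ(r) ≤ (1/r)·∫₀^r t²·K(t) dt − ∫₀^r t·K(t) dt. -/
open Set Filter MeasureTheory intervalIntegral

/-- Integration-by-parts step of the Bishop-type volume estimate: if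
`φ(r) → 0` as `r → 0⁺` and `φ'(r) ≤ -(1/r²) ∫₀ʳ t² K(t) dt` on `(0, R]`, then
`φ(r) ≤ (1/r) ∫₀ʳ t² K(t) dt - ∫₀ʳ t K(t) dt` for all `r ∈ (0, R]`. -/
theorem log_area_element_bound (R : ℝ) (hR : 0 < R) (K φ φ' : ℝ → ℝ)
    (hK : ContinuousOn K (Icc 0 R))
    (hφ : ∀ r ∈ Ioc (0 : ℝ) R, HasDerivAt φ (φ' r) r)
    (hlim : Tendsto φ (nhdsWithin 0 (Ioi 0)) (nhds 0))
    (hφ' : ∀ r ∈ Ioc (0 : ℝ) R, φ' r ≤ -(1 / r ^ 2) * ∫ t in (0 : ℝ)..r, t ^ 2 * K t) :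
    ∀ r ∈ Ioc (0 : ℝ) R,
      φ r ≤ (1 / r) * (∫ t in (0 : ℝ)..r, t ^ 2 * K t) - ∫ t in (0 : ℝ)..r, t * K t := by
  obtain ⟨M, hM⟩ := (isCompact_Icc).exists_bound_of_continuousOn hK
  have hM0 : 0 ≤ M := le_trans (norm_nonneg _) (hM 0 ⟨le_rfl, hR.le⟩)
  set f₂ : ℝ → ℝ := fun t => t ^ 2 * K t with hf₂def
  set f₁ : ℝ → ℝ := fun t => t * K t with hf₁def
  have hf₂ : ContinuousOn f₂ (Icc 0 R) :=
    (continuous_pow 2).continuousOn.mul hK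
  have hf₁ : ContinuousOn f₁ (Icc 0 R) := continuousOn_id.mul hK
  set I : ℝ → ℝ := fun s => ∫ t in (0:ℝ)..s, f₂ t with hIdef
  set J : ℝ → ℝ := fun s => ∫ t in (0:ℝ)..s, f₁ t with hJdef
  set g : ℝ → ℝ := fun s => s⁻¹ * I s - J s with hgdef
  -- continuity of the primitives
  have hIcont : ContinuousOn I (Icc 0 R) := by
    have := continuousOn_primitive_interval (μ := volume) (a := 0) (b := R)
      (f := f₂) (by rw [uIcc_of_le hR.le]; exact hf₂.integrableOn_Icc)
    rwa [uIcc_of_le hR.le] at this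
  have hJcont : ContinuousOn J (Icc 0 R) := by
    have := continuousOn_primitive_interval (μ := volume) (a := 0) (b := R)
      (f := f₁) (by rw [uIcc_of_le hR.le]; exact hf₁.integrableOn_Icc)
    rwa [uIcc_of_le hR.le] at this
  have hgcont : ContinuousOn g (Ioc 0 R) := by
    apply ContinuousOn.sub
    · exact (continuousOn_inv₀.mono (fun x hx => ne_of_gt hx.1)).mul
        (hIcont.mono Ioc_subset_Icc_self)
    · exact hJcont.mono Ioc_subset_Icc_self
  -- derivative of g on the open interval
  have hg' : ∀ s ∈ Ioo (0:ℝ) R, HasDerivAt g (-(1 / s ^ 2) * I s) s := by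
    intro s hs
    have hsne : s ≠ 0 := ne_of_gt hs.1
    have hmem : Icc (0:ℝ) R ∈ nhds s := Icc_mem_nhds hs.1 hs.2
    have hI' : HasDerivAt I (f₂ s) s := by
      refine integral_hasDerivAt_right
        ((hf₂.mono (Icc_subset_Icc le_rfl hs.2.le)).intervalIntegrable_of_Icc hs.1.le)
        ?_ ((hf₂.continuousAt hmem))
      exact ContinuousOn.stronglyMeasurableAtFilter isOpen_Ioo
        (hf₂.mono Ioo_subset_Icc_self) s hs
    have hJ' : HasDerivAt J (f₁ s) s := by
      refine integral_hasDerivAt_right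
        ((hf₁.mono (Icc_subset_Icc le_rfl hs.2.le)).intervalIntegrable_of_Icc hs.1.le)
        ?_ ((hf₁.continuousAt hmem))
      exact ContinuousOn.stronglyMeasurableAtFilter isOpen_Ioo
        (hf₁.mono Ioo_subset_Icc_self) s hs
    have := ((hasDerivAt_inv hsne).mul hI').sub hJ'
    refine this.congr_deriv ?_
    simp only [f₂, f₁]
    field_simp
    ring
  intro r hr
  -- antitonicity of φ - g on [ε, r]
  have hanti : ∀ ε ∈ Ioo (0:ℝ) r, φ r - g r ≤ φ ε - g ε := by
    intro ε hε
    have hIcc : Icc ε r ⊆ Ioc 0 R := fun x hx => ⟨lt_of_lt_of_le hε.1 hx.1, hx.2.trans hr.2⟩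
    have hIoo : Ioo ε r ⊆ Ioo 0 R := fun x hx =>
      ⟨lt_trans hε.1 hx.1, lt_of_lt_of_le hx.2 hr.2⟩
    have key : AntitoneOn (fun s => φ s - g s) (Icc ε r) := by
      apply antitoneOn_of_deriv_nonpos (convex_Icc ε r)
      · exact ContinuousOn.sub
          (fun x hx => ((hφ x (hIcc hx)).continuousAt).continuousWithinAt)
          (hgcont.mono hIcc)
      · intro x hx
        rw [interior_Icc] at hx
        exact ((hφ x (hIcc (Ioo_subset_Icc_self hx))).sub (hg' x (hIoo hx))).differentiableAt.differentiableWithinAt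
      · intro x hx
        rw [interior_Icc] at hx
        have hd := (hφ x (hIcc (Ioo_subset_Icc_self hx))).sub (hg' x (hIoo hx))
        rw [show (fun s => φ s - g s) = φ - g from rfl, hd.deriv, sub_nonpos]
        exact hφ' x (hIcc (Ioo_subset_Icc_self hx))
    exact key ⟨le_rfl, hε.2.le⟩ ⟨hε.2.le, le_rfl⟩ hε.2.le
  -- the limit of φ - g at 0⁺ is 0
  have hg0 : Tendsto g (nhdsWithin 0 (Ioi 0)) (nhds 0) := by
    have hJ0 : Tendsto J (nhdsWithin 0 (Ioi 0)) (nhds 0) := by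
      have : Tendsto J (nhdsWithin 0 (Icc 0 R)) (nhds (J 0)) := hJcont 0 ⟨le_rfl, hR.le⟩
      have hle : nhdsWithin (0:ℝ) (Ioc 0 R) ≤ nhdsWithin 0 (Icc 0 R) :=
        nhdsWithin_mono _ Ioc_subset_Icc_self
      rw [← nhdsWithin_Ioc_eq_nhdsGT hR]
      simpa [hJdef, intervalIntegral.integral_same] using this.mono_left hle
    have hI0 : Tendsto (fun s => s⁻¹ * I s) (nhdsWithin 0 (Ioi 0)) (nhds 0) := by
      refine squeeze_zero_norm' (a := fun s => M * s ^ 2) ?_ ?_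
      · filter_upwards [Ioc_mem_nhdsGT_of_mem ⟨le_rfl, hR⟩] with s hs
        have hs0 : 0 < s := hs.1
        have hb : ‖I s‖ ≤ (M * s ^ 2) * |s - 0| := by
          apply intervalIntegral.norm_integral_le_of_norm_le_const
          intro t ht
          rw [uIoc_of_le hs0.le] at ht
          have ht0 : 0 < t := ht.1
          have hts : t ≤ s := ht.2
          have : ‖f₂ t‖ = t ^ 2 * ‖K t‖ := by
            simp [hf₂def, abs_mul, abs_of_nonneg (sq_nonneg t)]
          rw [this]
          calc t ^ 2 * ‖K t‖ ≤ s ^ 2 * M := by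
                apply mul_le_mul (by nlinarith) (hM t ⟨ht0.le, hts.trans hs.2⟩)
                  (norm_nonneg _) (sq_nonneg s)
            _ = M * s ^ 2 := mul_comm _ _
        rw [norm_mul, norm_inv]
        calc ‖s‖⁻¹ * ‖I s‖ ≤ ‖s‖⁻¹ * ((M * s ^ 2) * |s - 0|) := by
              apply mul_le_mul_of_nonneg_left hb (by positivity)
          _ = M * s ^ 2 := by
              rw [Real.norm_eq_abs, abs_of_pos hs0, sub_zero, abs_of_pos hs0]
              field_simp
      · have : Tendsto (fun s : ℝ => M * s ^ 2) (nhds 0) (nhds (M * 0 ^ 2)) :=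
          (continuous_const.mul (continuous_pow 2)).tendsto 0
        simpa using this.mono_left nhdsWithin_le_nhds
    simpa using hI0.sub hJ0
  have hφg : Tendsto (fun ε => φ ε - g ε) (nhdsWithin 0 (Ioi 0)) (nhds 0) := by
    simpa using hlim.sub hg0
  have hle : φ r - g r ≤ 0 := by
    apply ge_of_tendsto hφg
    filter_upwards [Ioo_mem_nhdsGT_of_mem ⟨le_rfl, hr.1⟩] with ε hε
    exact hanti ε hε
  have : φ r ≤ g r := sub_nonpos.mp hle
  simpa [hgdef, hIdef, hJdef, one_div] using this
end

section
/- Let R > 0, let K : [0, R] → ℝ be continuous, and let φ : (0, R] → ℝ be differentiable with φ(r) → 0 as r → 0⁺ and φ'(r) ≤ −(1/r²)·∫₀^r t²·K(t) dt for all r ∈ (0, R]. Then for every r ∈ (0, R] one has φ(r) + r·φ'(r) ≤ −∫₀^r t·K(t) dt; that is, the derivative of r ↦ r·φ(r) is bounded above by −∫₀^r t·K(t) dt. -/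
open Set Filter MeasureTheory

/-- Combined differential bound in the Bishop-type volume estimate: if
`φ(r) → 0` as `r → 0⁺` and `φ'(r) ≤ -(1/r²) ∫₀ʳ t² K(t) dt` on `(0, R]`, then
`φ(r) + r φ'(r) ≤ -∫₀ʳ t K(t) dt`, i.e. the derivative of `r ↦ r φ(r)` is bounded
above by `-∫₀ʳ t K(t) dt`, for all `r ∈ (0, R]`. -/
theorem deriv_r_phi_bound (R : ℝ) (hR : 0 < R) (K φ φ' : ℝ → ℝ)
    (hK : ContinuousOn K (Icc 0 R))
    (hφ : ∀ r ∈ Ioc (0 : ℝ) R, HasDerivAt φ (φ' r) r)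
    (hlim : Tendsto φ (nhdsWithin 0 (Ioi 0)) (nhds 0))
    (hφ' : ∀ r ∈ Ioc (0 : ℝ) R, φ' r ≤ -(1 / r ^ 2) * ∫ t in (0 : ℝ)..r, t ^ 2 * K t) :
    ∀ r ∈ Ioc (0 : ℝ) R,
      φ r + r * φ' r ≤ -∫ t in (0 : ℝ)..r, t * K t := by
  -- Extend K continuously to all of ℝ (Tietze)
  obtain ⟨Kc, hKc⟩ := ContinuousMap.exists_restrict_eq (Y := ℝ)
    (isClosed_Icc (a := (0:ℝ)) (b := R)) ⟨_, hK.restrict⟩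
  have hKeq : ∀ t ∈ Icc (0:ℝ) R, Kc t = K t := by
    intro t ht
    have := congrFun (congrArg ContinuousMap.toFun hKc) ⟨t, ht⟩
    simpa using this
  have hKccont : Continuous (Kc : ℝ → ℝ) := Kc.continuous
  set G : ℝ → ℝ := fun s => ∫ t in (0:ℝ)..s, t ^ 2 * Kc t with hGdef
  set H : ℝ → ℝ := fun s => ∫ t in (0:ℝ)..s, t * Kc t with hHdef
  have hcont2 : Continuous (fun t : ℝ => t ^ 2 * Kc t) := by continuity
  have hcont1 : Continuous (fun t : ℝ => t * Kc t) := by continuity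
  have hG : ∀ s : ℝ, HasDerivAt G (s ^ 2 * Kc s) s := fun s =>
    (hcont2.integral_hasStrictDerivAt 0 s).hasDerivAt
  have hH : ∀ s : ℝ, HasDerivAt H (s * Kc s) s := fun s =>
    (hcont1.integral_hasStrictDerivAt 0 s).hasDerivAt
  -- integrals in the statement equal those with Kc
  have hGint : ∀ r ∈ Ioc (0:ℝ) R, (∫ t in (0:ℝ)..r, t ^ 2 * K t) = G r := by
    intro r hr
    apply intervalIntegral.integral_congr
    intro t ht
    rw [uIcc_of_le hr.1.le] at ht
    simp only
    rw [hKeq t ⟨ht.1, ht.2.trans hr.2⟩]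
  have hHint : ∀ r ∈ Ioc (0:ℝ) R, (∫ t in (0:ℝ)..r, t * K t) = H r := by
    intro r hr
    apply intervalIntegral.integral_congr
    intro t ht
    rw [uIcc_of_le hr.1.le] at ht
    simp only
    rw [hKeq t ⟨ht.1, ht.2.trans hr.2⟩]
  -- F s = G s / s - H s ; ψ = φ - F
  set F : ℝ → ℝ := fun s => G s / s - H s with hFdef
  have hF : ∀ s ∈ Ioc (0:ℝ) R, HasDerivAt F (-(G s / s ^ 2)) s := by
    intro s hs
    have hs0 : s ≠ 0 := ne_of_gt hs.1
    have h1 : HasDerivAt (fun s => G s / s)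
        ((s ^ 2 * Kc s * s - G s * 1) / s ^ 2) s := (hG s).div (hasDerivAt_id s) hs0
    have := h1.sub (hH s)
    refine this.congr_deriv ?_
    have hs2 : s ^ 2 ≠ 0 := pow_ne_zero 2 hs0
    rw [eq_comm, eq_sub_iff_add_eq, eq_div_iff hs2, add_mul, neg_mul, div_mul_cancel₀ _ hs2]
    ring
  -- limit of F at 0⁺ is 0
  have hG0 : G 0 = 0 := by simp [hGdef]
  have hGslope : Tendsto (fun s => G s / s) (nhdsWithin 0 (Ioi 0)) (nhds 0) := by
    have h := (hG 0)
    rw [hasDerivAt_iff_tendsto_slope] at h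
    rw [show (0:ℝ) ^ 2 * Kc 0 = 0 by ring] at h
    have hsub : Ioi (0:ℝ) ⊆ {(0:ℝ)}ᶜ := by intro x hx; simpa using ne_of_gt hx
    have h' : Tendsto (slope G 0) (nhdsWithin 0 (Ioi 0)) (nhds 0) :=
      h.mono_left (nhdsWithin_mono 0 hsub)
    exact h'.congr (fun s => by simp [slope_def_field, hG0])
  have hH0 : Tendsto H (nhdsWithin 0 (Ioi 0)) (nhds 0) := by
    have h0 : H 0 = 0 := by simp [hHdef]
    have hc : ContinuousWithinAt H (Ioi 0) 0 := (hH 0).continuousAt.continuousWithinAt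
    simpa [h0] using hc.tendsto
  have hF0 : Tendsto F (nhdsWithin 0 (Ioi 0)) (nhds 0) := by
    have := hGslope.sub hH0
    simpa [hFdef] using this
  -- ψ = φ - F is antitone on (0, r] hence φ r ≤ F r
  have key : ∀ r ∈ Ioc (0:ℝ) R, φ r ≤ F r := by
    intro r hr
    set ψ : ℝ → ℝ := fun s => φ s - F s with hψdef
    have hψ0 : Tendsto ψ (nhdsWithin 0 (Ioi 0)) (nhds 0) := by
      have := hlim.sub hF0; simpa using this
    have hψr : ∀ ε ∈ Ioc (0:ℝ) r, ψ r ≤ ψ ε := by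
      intro ε hε
      have hsub : Icc ε r ⊆ Ioc (0:ℝ) R := fun x hx =>
        ⟨lt_of_lt_of_le hε.1 hx.1, hx.2.trans hr.2⟩
      have hd : ∀ x ∈ Icc ε r, HasDerivAt ψ (φ' x - (-(G x / x ^ 2))) x := by
        intro x hx
        exact (hφ x (hsub hx)).sub (hF x (hsub hx))
      have hanti : AntitoneOn ψ (Icc ε r) := by
        apply antitoneOn_of_deriv_nonpos (convex_Icc ε r)
        · exact fun x hx => (hd x hx).continuousAt.continuousWithinAt
        · intro x hx
          rw [interior_Icc] at hx
          exact ((hd x (Ioo_subset_Icc_self hx)).differentiableAt).differentiableWithinAt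
        · intro x hx
          rw [interior_Icc] at hx
          have hx' := Ioo_subset_Icc_self hx
          rw [(hd x hx').deriv]
          have hb := hφ' x (hsub hx')
          rw [hGint x (hsub hx')] at hb
          have : -(1 / x ^ 2) * G x = -(G x / x ^ 2) := by ring
          linarith [hb.trans_eq this]
      exact hanti ⟨le_refl ε, hε.2⟩ ⟨hε.2, le_refl r⟩ hε.2
    have : ψ r ≤ 0 := by
      apply ge_of_tendsto hψ0
      filter_upwards [Ioc_mem_nhdsGT_of_mem ⟨le_refl (0:ℝ), hr.1⟩] with ε hε
      exact hψr ε hε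
    simpa [hψdef] using sub_nonpos.mp this
  -- conclude
  intro r hr
  have hr0 : (0:ℝ) < r := hr.1
  have h1 := key r hr
  have h2 := hφ' r hr
  rw [hGint r hr] at h2
  rw [hHint r hr]
  have hb : φ r + r * φ' r ≤ F r + r * (-(1 / r ^ 2) * G r) :=
    add_le_add h1 (mul_le_mul_of_nonneg_left h2 hr0.le)
  refine hb.trans (le_of_eq ?_)
  have hrne : r ≠ 0 := hr0.ne'
  show G r / r - H r + r * (-(1 / r ^ 2) * G r) = -H r
  field_simp
  ring
end

section
/- Let R > 0 and λ ∈ ℝ, let f : [0, R] → ℝ be twice continuously differentiable, let K₀ : [0, R] → ℝ be continuous, and let φ : (0, R] → ℝ be differentiable such that r·φ(r) → 0 as r → 0⁺ and φ(r) + r·φ'(r) ≤ −∫₀^r t·(K₀(t) + λ − f''(t)) dt for all r ∈ (0, R]. Then for every r ∈ (0, R] one has r·φ(r) ≤ −λr³/6 + r·f(r) + r·f(0) − 2·∫₀^r f(t) dt − ∫₀^r ∫₀^s t·K₀(t) dt ds. -/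
open Set Filter MeasureTheory

/-- Key integral estimate in the proof of the volume growth theorems for gradient
ρ-Einstein solitons: along a radial geodesic, with `K₀` playing the role of `ρR`,
if `r φ(r) → 0` as `r → 0⁺` and
`φ(r) + r φ'(r) ≤ -∫₀ʳ t (K₀(t) + λ - f''(t)) dt` on `(0, R]`, then
`r φ(r) ≤ -λr³/6 + r f(r) + r f(0) - 2 ∫₀ʳ f - ∫₀ʳ ∫₀ˢ t K₀(t) dt ds`. -/
theorem r_phi_integral_estimate (R lam : ℝ) (hR : 0 < R)
    (f f' f'' K₀ φ φ' : ℝ → ℝ)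
    (hf : ∀ t ∈ Icc (0 : ℝ) R, HasDerivAt f (f' t) t)
    (hf' : ∀ t ∈ Icc (0 : ℝ) R, HasDerivAt f' (f'' t) t)
    (hf'' : ContinuousOn f'' (Icc 0 R))
    (hK : ContinuousOn K₀ (Icc 0 R))
    (hφ : ∀ r ∈ Ioc (0 : ℝ) R, HasDerivAt φ (φ' r) r)
    (hlim : Tendsto (fun r => r * φ r) (nhdsWithin 0 (Ioi 0)) (nhds 0))
    (hineq : ∀ r ∈ Ioc (0 : ℝ) R,
      φ r + r * φ' r ≤ -∫ t in (0 : ℝ)..r, t * (K₀ t + lam - f'' t)) :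
    ∀ r ∈ Ioc (0 : ℝ) R,
      r * φ r ≤ -lam * r ^ 3 / 6 + r * f r + r * f 0 - 2 * (∫ t in (0 : ℝ)..r, f t)
        - ∫ s in (0 : ℝ)..r, ∫ t in (0 : ℝ)..s, t * K₀ t := by
  intro r hr
  obtain ⟨hr0, hrR⟩ := hr
  -- basic continuity facts
  have hfc : ContinuousOn f (Icc 0 R) := fun t ht => ((hf t ht).continuousAt).continuousWithinAt
  have hf'c : ContinuousOn f' (Icc 0 R) := fun t ht => ((hf' t ht).continuousAt).continuousWithinAt
  set ψ : ℝ → ℝ := fun t => t * (K₀ t + lam - f'' t) with hψdef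
  have hψc : ContinuousOn ψ (Icc 0 R) :=
    (continuousOn_id).mul (((hK.add continuousOn_const)).sub hf'')
  -- generic integrability helper
  have hInt : ∀ g : ℝ → ℝ, ContinuousOn g (Icc 0 R) → ∀ s ∈ Icc (0 : ℝ) R,
      IntervalIntegrable g volume 0 s := by
    intro g hg s hs
    apply (hg.mono ?_).intervalIntegrable
    rw [uIcc_of_le hs.1]
    exact Icc_subset_Icc le_rfl hs.2
  have hrIcc : r ∈ Icc (0 : ℝ) R := ⟨hr0.le, hrR⟩
  set H : ℝ → ℝ := fun s => -∫ t in (0 : ℝ)..s, ψ t with hHdef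
  have hprimc : ContinuousOn (fun s => ∫ t in (0 : ℝ)..s, ψ t) (Icc 0 R) := by
    have := intervalIntegral.continuousOn_primitive_interval
      (f := ψ) (μ := volume) (a := (0 : ℝ)) (b := R)
      (((hψc.mono (by rw [uIcc_of_le hR.le]))).integrableOn_compact isCompact_uIcc)
    rwa [uIcc_of_le hR.le] at this
  have hHc : ContinuousOn H (Icc 0 R) := hprimc.neg
  -- Step 1:  r φ r ≤ ∫₀^r H
  have step1 : r * φ r ≤ ∫ s in (0 : ℝ)..r, H s := by
    set F : ℝ → ℝ := fun x => (∫ s in (0 : ℝ)..x, H s) - x * φ x with hFdef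
    have hHint : ∀ s ∈ Icc (0 : ℝ) R, IntervalIntegrable H volume 0 s := hInt H hHc
    -- F is monotone on [ε, r] for any 0 < ε < r
    have key : ∀ ε ∈ Ioo (0 : ℝ) r, F ε ≤ F r := by
      intro ε hε
      have hεr : Icc ε r ⊆ Icc 0 R := Icc_subset_Icc hε.1.le hrR
      have hFderiv : ∀ x ∈ Ioo ε r, HasDerivAt F (H x - (1 * φ x + x * φ' x)) x := by
        intro x hx
        have hxI : x ∈ Ioo (0 : ℝ) R := ⟨hε.1.trans hx.1, hx.2.trans_le hrR⟩
        have hxIcc : x ∈ Icc (0 : ℝ) R := ⟨hxI.1.le, hxI.2.le⟩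
        have h1 : HasDerivAt (fun x => ∫ s in (0 : ℝ)..x, H s) (H x) x := by
          refine intervalIntegral.integral_hasDerivAt_right (hHint x hxIcc) ?_ ?_
          · exact ContinuousOn.stronglyMeasurableAtFilter isOpen_Ioo
              (hHc.mono Ioo_subset_Icc_self) x hxI
          · exact hHc.continuousAt (Icc_mem_nhds hxI.1 hxI.2)
        exact h1.sub ((hasDerivAt_id x).mul (hφ x ⟨hxI.1, hxI.2.le⟩))
      have hFcont' : ContinuousOn F (Icc ε r) := by
        refine ContinuousOn.sub ?_ ?_
        · have : ContinuousOn (fun x => ∫ s in (0 : ℝ)..x, H s) (Icc 0 R) := by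
            have := intervalIntegral.continuousOn_primitive_interval
              (f := H) (μ := volume) (a := (0 : ℝ)) (b := R)
              (((hHc.mono (by rw [uIcc_of_le hR.le]))).integrableOn_compact isCompact_uIcc)
            rwa [uIcc_of_le hR.le] at this
          exact this.mono hεr
        · exact fun x hx => ((hasDerivAt_id x).mul
            (hφ x ⟨hε.1.trans_le hx.1, hx.2.trans hrR⟩)).continuousAt.continuousWithinAt
      have hmono : MonotoneOn F (Icc ε r) := by
        apply monotoneOn_of_deriv_nonneg (convex_Icc ε r) hFcont'
        · intro x hx
          rw [interior_Icc] at hx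
          exact (hFderiv x hx).differentiableAt.differentiableWithinAt
        · intro x hx
          rw [interior_Icc] at hx
          rw [(hFderiv x hx).deriv]
          have hxIoc : x ∈ Ioc (0 : ℝ) R := ⟨hε.1.trans hx.1, (hx.2.trans_le hrR).le⟩
          have h2 := hineq x hxIoc
          have hHx : H x = -∫ t in (0 : ℝ)..x, ψ t := rfl
          simp only [one_mul]
          linarith [h2, hHx.ge, hHx.le]
      exact hmono ⟨le_rfl, hε.2.le⟩ ⟨hε.2.le, le_rfl⟩ hε.2.le
    -- F ε → 0 as ε → 0⁺
    have hFlim : Tendsto F (nhdsWithin 0 (Ioi 0)) (nhds 0) := by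
      have h1 : Tendsto (fun x => ∫ s in (0 : ℝ)..x, H s) (nhdsWithin 0 (Ioi 0)) (nhds 0) := by
        have hc : ContinuousOn (fun x => ∫ s in (0 : ℝ)..x, H s) (Icc 0 R) := by
          have := intervalIntegral.continuousOn_primitive_interval
            (f := H) (μ := volume) (a := (0 : ℝ)) (b := R)
            (((hHc.mono (by rw [uIcc_of_le hR.le]))).integrableOn_compact isCompact_uIcc)
          rwa [uIcc_of_le hR.le] at this
        have h0 : (0 : ℝ) ∈ Icc (0 : ℝ) R := ⟨le_rfl, hR.le⟩
        have := (hc 0 h0).tendsto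
        simp only [intervalIntegral.integral_same] at this
        rw [← nhdsWithin_Ioc_eq_nhdsGT hR]
        exact this.mono_left (nhdsWithin_mono 0 Ioc_subset_Icc_self)
      have := h1.sub hlim
      simpa using this
    have hev : ∀ᶠ ε in nhdsWithin 0 (Ioi 0), F ε ≤ F r := by
      filter_upwards [Ioo_mem_nhdsGT_of_mem (by exact ⟨le_rfl, hr0⟩ : (0:ℝ) ∈ Ico 0 r)]
        with ε hε using key ε hε
    have h0F : (0 : ℝ) ≤ F r := le_of_tendsto hFlim hev
    simpa [hFdef, sub_nonneg] using h0F
  -- Step 2: compute ∫₀^r H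
  have hBeq : ∀ s ∈ Icc (0 : ℝ) R, (∫ t in (0 : ℝ)..s, t * f'' t) = s * f' s - f s + f 0 := by
    intro s hs
    have hder : ∀ t ∈ uIcc (0 : ℝ) s, HasDerivAt (fun t => t * f' t - f t) (t * f'' t) t := by
      intro t ht
      rw [uIcc_of_le hs.1] at ht
      have htIcc : t ∈ Icc (0 : ℝ) R := ⟨ht.1, ht.2.trans hs.2⟩
      have : HasDerivAt (fun t => t * f' t - f t) (1 * f' t + t * f'' t - f' t) t :=
        ((hasDerivAt_id t).mul (hf' t htIcc)).sub (hf t htIcc)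
      convert this using 1
      ring
    have hint : IntervalIntegrable (fun t => t * f'' t) volume 0 s :=
      hInt _ (continuousOn_id.mul hf'') s hs
    have := intervalIntegral.integral_eq_sub_of_hasDerivAt hder hint
    rw [this]; ring
  have hψeq : ∀ s ∈ Icc (0 : ℝ) R,
      H s = -(∫ t in (0 : ℝ)..s, t * K₀ t) - lam * s ^ 2 / 2
        + (s * f' s - f s + f 0) := by
    intro s hs
    have i1 : IntervalIntegrable (fun t => t * K₀ t) volume 0 s :=
      hInt _ (continuousOn_id.mul hK) s hs
    have i2 : IntervalIntegrable (fun t => lam * t) volume 0 s :=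
      (continuous_const.mul continuous_id).intervalIntegrable 0 s
    have i3 : IntervalIntegrable (fun t => t * f'' t) volume 0 s :=
      hInt _ (continuousOn_id.mul hf'') s hs
    have hsplit : (∫ t in (0 : ℝ)..s, ψ t)
        = (∫ t in (0 : ℝ)..s, t * K₀ t) + (∫ t in (0 : ℝ)..s, lam * t)
          - (∫ t in (0 : ℝ)..s, t * f'' t) := by
      rw [← intervalIntegral.integral_add i1 i2,
        ← intervalIntegral.integral_sub (i1.add i2) i3]
      apply intervalIntegral.integral_congr
      intro t _
      simp only [hψdef]
      ring
    have hlin : (∫ t in (0 : ℝ)..s, lam * t) = lam * s ^ 2 / 2 := by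
      rw [intervalIntegral.integral_const_mul]
      simp [integral_id]
      ring
    simp only [hHdef, hsplit, hlin, hBeq s hs]
    ring
  have hfInt : IntervalIntegrable f volume 0 r := hInt f hfc r hrIcc
  have htf'Int : IntervalIntegrable (fun s => s * f' s) volume 0 r :=
    hInt _ (continuousOn_id.mul hf'c) r hrIcc
  have hAcont : ContinuousOn (fun s => ∫ t in (0 : ℝ)..s, t * K₀ t) (Icc 0 R) := by
    have := intervalIntegral.continuousOn_primitive_interval
      (f := fun t => t * K₀ t) (μ := volume) (a := (0 : ℝ)) (b := R)
      ((((continuousOn_id.mul hK)).mono (by rw [uIcc_of_le hR.le])).integrableOn_compact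
        isCompact_uIcc)
    rwa [uIcc_of_le hR.le] at this
  have hAInt : IntervalIntegrable (fun s => ∫ t in (0 : ℝ)..s, t * K₀ t) volume 0 r :=
    hInt _ hAcont r hrIcc
  have hsf'eq : (∫ s in (0 : ℝ)..r, s * f' s) = r * f r - ∫ s in (0 : ℝ)..r, f s := by
    have hder : ∀ s ∈ uIcc (0 : ℝ) r, HasDerivAt (fun s => s * f s) (f s + s * f' s) s := by
      intro s hs
      rw [uIcc_of_le hr0.le] at hs
      have hsIcc : s ∈ Icc (0 : ℝ) R := ⟨hs.1, hs.2.trans hrR⟩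
      have : HasDerivAt (fun s => s * f s) (1 * f s + s * f' s) s :=
        (hasDerivAt_id s).mul (hf s hsIcc)
      convert this using 1
      ring
    have hint : IntervalIntegrable (fun s => f s + s * f' s) volume 0 r :=
      hfInt.add htf'Int
    have := intervalIntegral.integral_eq_sub_of_hasDerivAt hder hint
    rw [intervalIntegral.integral_add hfInt htf'Int] at this
    simp at this
    linarith
  -- combine for the integral of H
  have hHsum : (∫ s in (0 : ℝ)..r, H s)
      = -(∫ s in (0 : ℝ)..r, ∫ t in (0 : ℝ)..s, t * K₀ t)
        - lam * r ^ 3 / 6 + (r * f r - ∫ s in (0 : ℝ)..r, f s)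
        - (∫ s in (0 : ℝ)..r, f s) + r * f 0 := by
    have hcong : ∀ s ∈ uIcc (0 : ℝ) r,
        H s = -(∫ t in (0 : ℝ)..s, t * K₀ t) - lam * s ^ 2 / 2
          + (s * f' s - f s + f 0) := by
      intro s hs
      rw [uIcc_of_le hr0.le] at hs
      exact hψeq s ⟨hs.1, hs.2.trans hrR⟩
    rw [intervalIntegral.integral_congr hcong]
    have i1 : IntervalIntegrable (fun s => -(∫ t in (0 : ℝ)..s, t * K₀ t)) volume 0 r :=
      hAInt.neg
    have i2 : IntervalIntegrable (fun s => lam * s ^ 2 / 2) volume 0 r :=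
      ((continuous_const.mul (continuous_pow 2)).div_const 2).intervalIntegrable 0 r
    have i3 : IntervalIntegrable (fun s => s * f' s - f s + f 0) volume 0 r :=
      (htf'Int.sub hfInt).add intervalIntegrable_const
    rw [intervalIntegral.integral_add (i1.sub i2) i3,
      intervalIntegral.integral_sub i1 i2,
      intervalIntegral.integral_add (htf'Int.sub hfInt) intervalIntegrable_const,
      intervalIntegral.integral_sub htf'Int hfInt,
      intervalIntegral.integral_neg, hsf'eq]
    have hsq : (∫ s in (0 : ℝ)..r, lam * s ^ 2 / 2) = lam * r ^ 3 / 6 := by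
      have : (∫ s in (0 : ℝ)..r, lam * s ^ 2 / 2)
          = (lam / 2) * ∫ s in (0 : ℝ)..r, s ^ 2 := by
        rw [← intervalIntegral.integral_const_mul]
        congr 1; funext s; ring
      rw [this, integral_pow]
      ring
    rw [hsq]
    simp [intervalIntegral.integral_const]
    ring
  calc r * φ r ≤ ∫ s in (0 : ℝ)..r, H s := step1
    _ = _ := by rw [hHsum]; ring
end

section
/- Let n ≥ 2 be an integer, λ ∈ ℝ, and R̄ > 0. Let f : [0, R̄] → ℝ be twice continuously differentiable, let K₀ : [0, R̄] → ℝ be continuous with K₀(t) ≥ 0 for all t, and let J : (0, R̄] → (0, ∞) be twice differentiable such that J(r)/r^{n−1} → 1 and t²·(J'(t)/J(t)) → 0 as r, t → 0⁺, and such that (J'/J)'(t) + (J'(t)/J(t))²/(n−1) + K₀(t) + λ − f''(t) ≤ 0 for all t ∈ (0, R̄]. Then for every r ∈ (0, R̄] one has J(r) ≤ r^{n−1}·exp(−λr²/6 + f(r) + f(0) − (2/r)·∫₀^r f(t) dt). -/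
open Set Filter MeasureTheory

lemma mono_limit_aux {R L : ℝ} (hR : 0 < R) (ψ : ℝ → ℝ)
    (hc : ContinuousOn ψ (Ioc 0 R))
    (hder : ∀ t ∈ Ioo (0:ℝ) R, ∃ d, HasDerivAt ψ d t ∧ d ≤ 0)
    (hlim : Tendsto ψ (nhdsWithin 0 (Ioi 0)) (nhds L)) :
    ∀ r ∈ Ioc (0:ℝ) R, ψ r ≤ L := by
  have hanti : AntitoneOn ψ (Ioc 0 R) := by
    apply antitoneOn_of_deriv_nonpos (convex_Ioc 0 R) hc
    · intro x hx
      rw [interior_Ioc] at hx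
      obtain ⟨d, hd, _⟩ := hder x hx
      exact hd.differentiableAt.differentiableWithinAt
    · intro x hx
      rw [interior_Ioc] at hx
      obtain ⟨d, hd, hd0⟩ := hder x hx
      rw [hd.deriv]; exact hd0
  intro r hr
  have hev : ∀ᶠ ε in nhdsWithin 0 (Ioi 0), ψ r ≤ ψ ε := by
    filter_upwards [Ioo_mem_nhdsGT_of_mem ⟨le_refl 0, hr.1⟩] with ε hε
    exact hanti ⟨hε.1, hε.2.le.trans hr.2⟩ hr hε.2.le
  exact ge_of_tendsto hlim hev


set_option maxHeartbeats 2000000 in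
/-- Pointwise area-element bound underlying the volume growth estimate for complete
noncompact gradient shrinking ρ-Einstein solitons (with ρ > 0 and R ≥ 0): `J` plays
the role of the area element in polar normal coordinates, `K₀` the nonnegative term
`ρR`, the Riccati inequality `(J'/J)' + (J'/J)²/(n-1) + K₀ + λ - f'' ≤ 0` holds
(here `(J'/J)' = J''/J - (J'/J)²`), `J(r)/r^{n-1} → 1` and `t²(J'/J)(t) → 0` as
`r, t → 0⁺`; then `J(r) ≤ r^{n-1} exp(-λr²/6 + f(r) + f(0) - (2/r) ∫₀ʳ f)`. -/
theorem area_element_bound (n : ℕ) (hn : 2 ≤ n) (lam R : ℝ) (hR : 0 < R)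
    (f f' f'' K₀ J J' J'' : ℝ → ℝ)
    (hf : ∀ t ∈ Icc (0 : ℝ) R, HasDerivAt f (f' t) t)
    (hf' : ∀ t ∈ Icc (0 : ℝ) R, HasDerivAt f' (f'' t) t)
    (hf'' : ContinuousOn f'' (Icc 0 R))
    (hK : ContinuousOn K₀ (Icc 0 R))
    (hKnonneg : ∀ t ∈ Icc (0 : ℝ) R, 0 ≤ K₀ t)
    (hJpos : ∀ t ∈ Ioc (0 : ℝ) R, 0 < J t)
    (hJ : ∀ t ∈ Ioc (0 : ℝ) R, HasDerivAt J (J' t) t)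
    (hJ' : ∀ t ∈ Ioc (0 : ℝ) R, HasDerivAt J' (J'' t) t)
    (hlim1 : Tendsto (fun r => J r / r ^ (n - 1)) (nhdsWithin 0 (Ioi 0)) (nhds 1))
    (hlim2 : Tendsto (fun t => t ^ 2 * (J' t / J t)) (nhdsWithin 0 (Ioi 0)) (nhds 0))
    (hRic : ∀ t ∈ Ioc (0 : ℝ) R,
      (J'' t / J t - (J' t / J t) ^ 2) + (J' t / J t) ^ 2 / ((n : ℝ) - 1)
        + K₀ t + lam - f'' t ≤ 0) :
    ∀ r ∈ Ioc (0 : ℝ) R,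
      J r ≤ r ^ (n - 1) *
        Real.exp (-lam * r ^ 2 / 6 + f r + f 0 - (2 / r) * ∫ t in (0 : ℝ)..r, f t) := by
  set F : ℝ → ℝ := fun x => ∫ t in (0:ℝ)..x, f t with hFdef
  set m : ℝ := (n : ℝ) - 1 with hmdef
  have hm1 : (1:ℝ) ≤ m := by
    have : (2:ℝ) ≤ (n:ℝ) := by exact_mod_cast hn
    simp only [hmdef]; linarith
  have hm0 : (0:ℝ) < m := lt_of_lt_of_le one_pos hm1
  -- basic continuity / integrability facts
  have hfc : ContinuousOn f (Icc 0 R) := fun t ht => (hf t ht).continuousAt.continuousWithinAt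
  have hf'c : ContinuousOn f' (Icc 0 R) := fun t ht => (hf' t ht).continuousAt.continuousWithinAt
  have hFint : ∀ t ∈ Icc (0:ℝ) R, IntervalIntegrable f volume 0 t := by
    intro t ht
    apply ContinuousOn.intervalIntegrable
    apply hfc.mono
    rw [uIcc_of_le ht.1]
    exact Icc_subset_Icc le_rfl ht.2
  have hFcont : ContinuousOn F (Icc 0 R) := by
    have := intervalIntegral.continuousOn_primitive_interval
      (μ := volume) (a := (0:ℝ)) (b := R) (f := f)
      (by rw [uIcc_of_le hR.le]; exact hfc.integrableOn_Icc)
    rwa [uIcc_of_le hR.le] at this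
  have hF0 : F 0 = 0 := intervalIntegral.integral_same
  have hFd : ∀ t ∈ Ioo (0:ℝ) R, HasDerivAt F (f t) t := by
    intro t ht
    apply intervalIntegral.integral_hasDerivAt_right
      (hFint t ⟨ht.1.le, ht.2.le⟩)
    · exact ⟨Ioo 0 R, Ioo_mem_nhds ht.1 ht.2,
        ((hfc.mono Ioo_subset_Icc_self).aestronglyMeasurable measurableSet_Ioo)⟩
    · exact (hf t ⟨ht.1.le, ht.2.le⟩).continuousAt
  have hF0d : HasDerivWithinAt F (f 0) (Ici 0) 0 := by
    apply intervalIntegral.integral_hasDerivWithinAt_right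
      (hFint 0 ⟨le_rfl, hR.le⟩) (t := Ioi 0)
    · exact ⟨Ioc 0 R, Ioc_mem_nhdsGT hR,
        (hfc.mono Ioc_subset_Icc_self).aestronglyMeasurable measurableSet_Ioc⟩
    · exact (hf 0 ⟨le_rfl, hR.le⟩).continuousAt.continuousWithinAt
  -- the filter
  have hIocIoi : nhdsWithin (0:ℝ) (Ioc 0 R) = nhdsWithin 0 (Ioi 0) :=
    nhdsWithin_Ioc_eq_nhdsGT hR
  have hid : Tendsto (fun t : ℝ => t) (nhdsWithin 0 (Ioi 0)) (nhds 0) :=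
    (continuous_id.tendsto 0).mono_left nhdsWithin_le_nhds
  have hFlim : Tendsto F (nhdsWithin 0 (Ioi 0)) (nhds 0) := by
    have := (hFcont.continuousWithinAt (⟨le_rfl, hR.le⟩ : (0:ℝ) ∈ Icc 0 R))
    rw [ContinuousWithinAt, hF0] at this
    exact this.mono_left (by rw [← hIocIoi]; exact nhdsWithin_mono 0 Ioc_subset_Icc_self)
  have hftend : Tendsto f (nhdsWithin (0:ℝ) (Ioi 0)) (nhds (f 0)) :=
    ((hf 0 ⟨le_rfl, hR.le⟩).continuousAt.tendsto).mono_left nhdsWithin_le_nhds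
  have hf'tend : Tendsto f' (nhdsWithin (0:ℝ) (Ioi 0)) (nhds (f' 0)) :=
    ((hf' 0 ⟨le_rfl, hR.le⟩).continuousAt.tendsto).mono_left nhdsWithin_le_nhds
  -- Step 1: the Riccati comparison
  have hstep1 : ∀ r ∈ Ioc (0:ℝ) R,
      r^2 * (J' r / J r) - (m*r - lam*r^3/3 + r^2 * f' r - 2*(r * f r) + 2 * F r) ≤ 0 := by
    apply mono_limit_aux hR
    · -- continuity on Ioc 0 R
      have hJc : ContinuousOn J (Ioc 0 R) := fun t ht => (hJ t ht).continuousAt.continuousWithinAt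
      have hJ'c : ContinuousOn J' (Ioc 0 R) := fun t ht => (hJ' t ht).continuousAt.continuousWithinAt
      refine ContinuousOn.sub ?_ ?_
      · exact (continuousOn_pow 2).mul (hJ'c.div hJc (fun t ht => (hJpos t ht).ne'))
      · refine ((((continuousOn_const.mul continuousOn_id).sub ?_).add
          ((continuousOn_pow 2).mul (hf'c.mono Ioc_subset_Icc_self))).sub
          (continuousOn_const.mul (continuousOn_id.mul (hfc.mono Ioc_subset_Icc_self)))).add
          (continuousOn_const.mul (hFcont.mono Ioc_subset_Icc_self))
        exact (continuousOn_const.mul (continuousOn_pow 3)).div_const 3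
    · -- derivative nonpositive on Ioo
      intro t ht
      have htIoc : t ∈ Ioc 0 R := ⟨ht.1, ht.2.le⟩
      have htIcc : t ∈ Icc 0 R := ⟨ht.1.le, ht.2.le⟩
      have hJne : J t ≠ 0 := (hJpos t htIoc).ne'
      have hA : HasDerivAt (fun s => s^2 * (J' s / J s))
          ((2:ℕ) * t^1 * (J' t / J t) + t^2 * ((J'' t * J t - J' t * J' t) / J t ^ 2)) t :=
        (hasDerivAt_pow 2 t).mul ((hJ' t htIoc).div (hJ t htIoc) hJne)
      have hB : HasDerivAt (fun s : ℝ => m * s) (m * 1) t := (hasDerivAt_id t).const_mul m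
      have hC : HasDerivAt (fun s : ℝ => lam * s^3 / 3) (lam * ((3:ℕ) * t^2) / 3) t :=
        ((hasDerivAt_pow 3 t).const_mul lam).div_const 3
      have hD : HasDerivAt (fun s => s^2 * f' s) ((2:ℕ) * t^1 * f' t + t^2 * f'' t) t :=
        (hasDerivAt_pow 2 t).mul (hf' t htIcc)
      have hE : HasDerivAt (fun s => 2 * (s * f s)) (2 * (1 * f t + t * f' t)) t :=
        ((hasDerivAt_id t).mul (hf t htIcc)).const_mul 2
      have hG : HasDerivAt (fun s => 2 * F s) (2 * f t) t := (hFd t ht).const_mul 2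
      refine ⟨_, hA.sub ((((hB.sub hC).add hD).sub hE).add hG), ?_⟩
      have hquot : (J'' t * J t - J' t * J' t) / J t ^ 2
          = J'' t / J t - (J' t / J t)^2 := by field_simp
      rw [hquot]
      have hric := hRic t htIoc
      have hK0 := hKnonneg t htIcc
      have key : J'' t / J t - (J' t / J t)^2 ≤ f'' t - lam - (J' t / J t)^2 / m := by
        rw [hmdef]; linarith
      have h2 : t^2 * (J'' t / J t - (J' t / J t)^2)
          ≤ t^2 * (f'' t - lam - (J' t / J t)^2 / m) :=
        mul_le_mul_of_nonneg_left key (sq_nonneg t)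
      have h3 : 2*t*(J' t / J t) - t^2*(J' t / J t)^2/m - m ≤ 0 := by
        have hnum : 2*t*(J' t / J t)*m - t^2*(J' t / J t)^2 - m^2 ≤ 0 := by
          nlinarith [sq_nonneg (t*(J' t / J t) - m)]
        have : 2*t*(J' t / J t) - t^2*(J' t / J t)^2/m - m
            = (2*t*(J' t / J t)*m - t^2*(J' t / J t)^2 - m^2)/m := by
          field_simp
        rw [this]
        exact div_nonpos_of_nonpos_of_nonneg hnum hm0.le
      have hexp : t^2 * (f'' t - lam - (J' t / J t)^2 / m)
          = t^2 * f'' t - lam * t^2 - t^2 * ((J' t / J t)^2 / m) := by ring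
      have h2' : t^2 * (J'' t / J t - (J' t / J t)^2)
          ≤ t^2 * f'' t - lam * t^2 - t^2 * ((J' t / J t)^2 / m) := by
        linarith [h2, hexp.le, hexp.ge]
      have h5 : 2*t*(J' t / J t) ≤ m + t^2 * ((J' t / J t)^2 / m) := by
        have hmul : 2*t*(J' t / J t)*m ≤ m^2 + t^2*(J' t / J t)^2 := by
          nlinarith [sq_nonneg (t*(J' t / J t) - m)]
        have e1 : 2*t*(J' t / J t) = (2*t*(J' t / J t)*m)/m := by field_simp
        have e2 : m + t^2 * ((J' t / J t)^2 / m) = (m^2 + t^2*(J' t / J t)^2)/m := by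
          field_simp
        rw [e1, e2]
        exact (div_le_div_iff_of_pos_right hm0).mpr hmul
      push_cast
      linarith [h2', h5]
    · -- limit 0
      have h1 : Tendsto (fun t => m*t - lam*t^3/3 + t^2 * f' t - 2*(t * f t) + 2 * F t)
          (nhdsWithin 0 (Ioi 0))
          (nhds (m*0 - lam*0^3/3 + 0^2 * f' 0 - 2*(0 * f 0) + 2 * 0)) := by
        exact ((((tendsto_const_nhds.mul hid).sub
          ((tendsto_const_nhds.mul (hid.pow 3)).div_const 3)).add
          ((hid.pow 2).mul hf'tend)).sub
          (tendsto_const_nhds.mul (hid.mul hftend))).add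
          (tendsto_const_nhds.mul hFlim)
      norm_num at h1
      have := hlim2.sub h1
      norm_num at this
      exact this
  have hcast : ((n-1 : ℕ) : ℝ) = m := by
    rw [hmdef, Nat.cast_sub (by omega : 1 ≤ n)]
    norm_num
  -- Step 2: integrate the estimate
  have hstep2 : ∀ r ∈ Ioc (0:ℝ) R,
      Real.log (J r) - m * Real.log r + lam * r^2 / 6 - f r - f 0 + 2 * (F r / r) ≤ 0 := by
    apply mono_limit_aux hR
    · -- continuity
      have hJc : ContinuousOn J (Ioc 0 R) := fun t ht => (hJ t ht).continuousAt.continuousWithinAt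
      refine ((((hJc.log (fun t ht => (hJpos t ht).ne')).sub
        (continuousOn_const.mul (continuousOn_id.log (fun t ht => ht.1.ne')))).add
        ((continuousOn_const.mul (continuousOn_pow 2)).div_const 6)).sub
        (hfc.mono Ioc_subset_Icc_self)).sub continuousOn_const |>.add
        (continuousOn_const.mul ((hFcont.mono Ioc_subset_Icc_self).div continuousOn_id
          (fun t ht => ht.1.ne')))
    · -- derivative nonpositive
      intro t ht
      have htIoc : t ∈ Ioc 0 R := ⟨ht.1, ht.2.le⟩
      have htIcc : t ∈ Icc 0 R := ⟨ht.1.le, ht.2.le⟩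
      have hJne : J t ≠ 0 := (hJpos t htIoc).ne'
      have htne : t ≠ 0 := ht.1.ne'
      have hL : HasDerivAt (fun s => Real.log (J s)) (J' t / J t) t := (hJ t htIoc).log hJne
      have hM : HasDerivAt (fun s : ℝ => m * Real.log s) (m * t⁻¹) t :=
        (Real.hasDerivAt_log htne).const_mul m
      have hQ : HasDerivAt (fun s : ℝ => lam * s^2 / 6) (lam * ((2:ℕ) * t^1) / 6) t :=
        ((hasDerivAt_pow 2 t).const_mul lam).div_const 6
      have hP : HasDerivAt (fun s => 2 * (F s / s)) (2 * ((f t * t - F t * 1) / t ^ 2)) t :=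
        ((hFd t ht).div (hasDerivAt_id t) htne).const_mul 2
      refine ⟨_, ((((hL.sub hM).add hQ).sub (hf t htIcc)).sub (hasDerivAt_const t (f 0))).add hP, ?_⟩
      have hd2 : J' t / J t - m * t⁻¹ + lam * (((2:ℕ):ℝ) * t^1) / 6 - f' t - 0
            + 2 * ((f t * t - F t * 1) / t ^ 2)
          = (t^2 * (J' t / J t)
              - (m*t - lam*t^3/3 + t^2 * f' t - 2*(t * f t) + 2 * F t)) / t^2 := by
        push_cast
        field_simp
        ring
      have hdiv := div_nonpos_of_nonpos_of_nonneg (hstep1 t htIoc) (sq_nonneg t)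
      push_cast
      push_cast at hd2
      linarith [hd2.le, hd2.ge, hdiv]
    · -- limit 0
      have hA : Tendsto (fun t => Real.log (J t) - m * Real.log t)
          (nhdsWithin 0 (Ioi 0)) (nhds 0) := by
        have hcomp : Tendsto (fun r => Real.log (J r / r ^ (n-1)))
            (nhdsWithin 0 (Ioi 0)) (nhds 0) := by
          have := (Real.continuousAt_log one_ne_zero).tendsto.comp hlim1
          simpa [Function.comp_def] using this
        apply hcomp.congr'
        filter_upwards [Ioc_mem_nhdsGT hR] with t ht
        rw [Real.log_div (hJpos t ht).ne' (pow_ne_zero _ ht.1.ne'), Real.log_pow, hcast]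
      have hB : Tendsto (fun t : ℝ => lam * t^2 / 6) (nhdsWithin 0 (Ioi 0)) (nhds 0) := by
        have hBc : Continuous fun t : ℝ => lam * t^2/6 := by continuity
        have h := (hBc.tendsto 0).mono_left
          (nhdsWithin_le_nhds (s := Ioi (0:ℝ)))
        norm_num at h
        exact h
      have hD : Tendsto (fun t => 2 * (F t / t)) (nhdsWithin 0 (Ioi 0)) (nhds (2 * f 0)) := by
        have hslope := hasDerivWithinAt_iff_tendsto_slope.1 hF0d
        have hsl : Tendsto (slope F 0) (nhdsWithin 0 (Ioi 0)) (nhds (f 0)) :=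
          hslope.mono_left (nhdsWithin_mono 0
            (fun x hx => ⟨le_of_lt (mem_Ioi.mp hx), by simp [ne_of_gt (mem_Ioi.mp hx)]⟩))
        apply (tendsto_const_nhds.mul hsl).congr'
        filter_upwards [self_mem_nhdsWithin] with t ht
        rw [slope_def_field, hF0]
        ring
      have htot := ((((hA.add hB).sub hftend).sub
        (tendsto_const_nhds : Tendsto (fun _ : ℝ => f 0) _ (nhds (f 0)))).add hD)
      convert htot using 2
      ring
  -- conclusion
  intro r hr
  have hφ := hstep2 r hr
  have hJr := hJpos r hr
  have hrp : (0:ℝ) < r ^ (n-1) := pow_pos hr.1 _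
  rw [← Real.exp_log hJr, ← Real.exp_log hrp, ← Real.exp_add, Real.exp_le_exp,
    Real.log_pow, hcast]
  simp only [hFdef] at hφ
  have e : 2 * ((∫ (t : ℝ) in (0:ℝ)..r, f t) / r) = 2 / r * ∫ (t : ℝ) in (0:ℝ)..r, f t := by
    ring
  rw [e] at hφ
  linarith [hφ]
end

section
/- Let n ≥ 2 be an integer, λ ∈ ℝ, and R̄ > 0. Let f : [0, R̄] → ℝ be twice continuously differentiable, let K₀ : [0, R̄] → ℝ be continuous (no sign condition), and let J : (0, R̄] → (0, ∞) be twice differentiable such that J(r)/r^{n−1} → 1 and t²·(J'(t)/J(t)) → 0 as r, t → 0⁺, and such that (J'/J)'(t) + (J'(t)/J(t))²/(n−1) + K₀(t) + λ − f''(t) ≤ 0 for all t ∈ (0, R̄]. Then for every r ∈ (0, R̄] one has J(r)·e^{−f(r)} ≤ r^{n−1}·exp(−λr²/6 + f(0) − (2/r)·∫₀^r f(t) dt − (1/r)·∫₀^r ∫₀^s t·K₀(t) dt ds). -/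
open Set Filter MeasureTheory

private lemma key_mono {R : ℝ} (φ ψ φd ψd : ℝ → ℝ)
    (hφc : ContinuousOn φ (Ioc 0 R)) (hψc : ContinuousOn ψ (Ioc 0 R))
    (hφ : ∀ t ∈ Ioo (0:ℝ) R, HasDerivAt φ (φd t) t)
    (hψ : ∀ t ∈ Ioo (0:ℝ) R, HasDerivAt ψ (ψd t) t)
    (hle : ∀ t ∈ Ioo (0:ℝ) R, φd t ≤ ψd t)
    (hlim : Tendsto (fun t => ψ t - φ t) (nhdsWithin 0 (Ioi 0)) (nhds 0)) :
    ∀ r ∈ Ioc (0:ℝ) R, φ r ≤ ψ r := by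
  intro r hr
  have key : ∀ ε ∈ Ioo (0:ℝ) r, ψ ε - φ ε ≤ ψ r - φ r := by
    intro ε hε
    have hsub : Icc ε r ⊆ Ioc 0 R := fun x hx => ⟨lt_of_lt_of_le hε.1 hx.1, le_trans hx.2 hr.2⟩
    have hsub2 : ∀ x ∈ Ioo ε r, x ∈ Ioo (0:ℝ) R := fun x hx =>
      ⟨lt_trans hε.1 hx.1, lt_of_lt_of_le hx.2 hr.2⟩
    have hgc : ContinuousOn (fun t => ψ t - φ t) (Icc ε r) :=
      (hψc.mono hsub).sub (hφc.mono hsub)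
    have hmono : MonotoneOn (fun t => ψ t - φ t) (Icc ε r) := by
      apply monotoneOn_of_deriv_nonneg (convex_Icc ε r) hgc
      · intro x hx
        rw [interior_Icc] at hx
        exact (((hψ x (hsub2 x hx)).sub (hφ x (hsub2 x hx))).differentiableAt).differentiableWithinAt
      · intro x hx
        rw [interior_Icc] at hx
        rw [show (fun t => ψ t - φ t) = ψ - φ from rfl, ((hψ x (hsub2 x hx)).sub (hφ x (hsub2 x hx))).deriv]
        linarith [hle x (hsub2 x hx)]
    exact hmono ⟨le_refl ε, hε.2.le⟩ ⟨hε.2.le, le_refl r⟩ hε.2.le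
  have hev : ∀ᶠ ε in nhdsWithin (0:ℝ) (Ioi 0), ψ ε - φ ε ≤ ψ r - φ r := by
    filter_upwards [Ioo_mem_nhdsGT_of_mem (by exact ⟨le_refl 0, hr.1⟩ : (0:ℝ) ∈ Ico 0 r)] with ε hε
    exact key ε hε
  have h0 : (0:ℝ) ≤ ψ r - φ r := le_of_tendsto hlim hev
  linarith

private lemma prim_hasDerivAt {R : ℝ} {g : ℝ → ℝ} (hg : ContinuousOn g (Icc 0 R))
    {r : ℝ} (hr : r ∈ Ioo (0:ℝ) R) :
    HasDerivAt (fun x => ∫ s in (0:ℝ)..x, g s) (g r) r := by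
  have hgo : ContinuousOn g (Ioo 0 R) := hg.mono Ioo_subset_Icc_self
  have hint : IntervalIntegrable g volume 0 r :=
    (hg.mono (by rw [uIcc_of_le hr.1.le]; exact Icc_subset_Icc le_rfl hr.2.le)).intervalIntegrable
  exact intervalIntegral.integral_hasDerivAt_right hint
    (hgo.stronglyMeasurableAtFilter isOpen_Ioo r hr)
    (hgo.continuousAt (isOpen_Ioo.mem_nhds hr))

private lemma prim_contOn {R : ℝ} (hR : 0 < R) {g : ℝ → ℝ} (hg : ContinuousOn g (Icc 0 R)) :
    ContinuousOn (fun x => ∫ s in (0:ℝ)..x, g s) (Icc 0 R) := by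
  have := intervalIntegral.continuousOn_primitive_interval
    (a := (0:ℝ)) (b := R) (μ := volume) (f := g) ?_
  · rwa [uIcc_of_le hR.le] at this
  · rw [uIcc_of_le hR.le]; exact hg.integrableOn_compact isCompact_Icc

private lemma nhds_le {R : ℝ} (hR : 0 < R) :
    nhdsWithin (0:ℝ) (Ioi 0) ≤ nhdsWithin (0:ℝ) (Icc 0 R) := by
  apply nhdsWithin_le_of_mem
  filter_upwards [Ioc_mem_nhdsGT_of_mem (by exact ⟨le_refl 0, hR⟩ : (0:ℝ) ∈ Ico 0 R)] with x hx
  exact Ioc_subset_Icc_self hx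

private lemma prim_tendsto {R : ℝ} (hR : 0 < R) {g : ℝ → ℝ} (hg : ContinuousOn g (Icc 0 R)) :
    Tendsto (fun x => ∫ s in (0:ℝ)..x, g s) (nhdsWithin 0 (Ioi 0)) (nhds 0) := by
  have h := (prim_contOn hR hg) 0 ⟨le_refl 0, hR.le⟩
  have h2 := h.tendsto
  simp only [intervalIntegral.integral_same] at h2
  exact h2.mono_left (nhds_le hR)

/-- Pointwise weighted area-element bound underlying the weighted volume growth
estimate for complete noncompact gradient ρ-Einstein solitons: `J` plays the role
of the area element in polar normal coordinates, `K₀` the term `ρR` (no sign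
condition), the Riccati inequality `(J'/J)' + (J'/J)²/(n-1) + K₀ + λ - f'' ≤ 0`
holds (here `(J'/J)' = J''/J - (J'/J)²`), `J(r)/r^{n-1} → 1` and
`t²(J'/J)(t) → 0` as `r, t → 0⁺`; then
`J(r) e^{-f(r)} ≤ r^{n-1} exp(-λr²/6 + f(0) - (2/r)∫₀ʳ f - (1/r)∫₀ʳ∫₀ˢ t K₀)`. -/
theorem weighted_area_element_bound (n : ℕ) (hn : 2 ≤ n) (lam R : ℝ) (hR : 0 < R)
    (f f' f'' K₀ J J' J'' : ℝ → ℝ)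
    (hf : ∀ t ∈ Icc (0 : ℝ) R, HasDerivAt f (f' t) t)
    (hf' : ∀ t ∈ Icc (0 : ℝ) R, HasDerivAt f' (f'' t) t)
    (hf'' : ContinuousOn f'' (Icc 0 R))
    (hK : ContinuousOn K₀ (Icc 0 R))
    (hJpos : ∀ t ∈ Ioc (0 : ℝ) R, 0 < J t)
    (hJ : ∀ t ∈ Ioc (0 : ℝ) R, HasDerivAt J (J' t) t)
    (hJ' : ∀ t ∈ Ioc (0 : ℝ) R, HasDerivAt J' (J'' t) t)
    (hlim1 : Tendsto (fun r => J r / r ^ (n - 1)) (nhdsWithin 0 (Ioi 0)) (nhds 1))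
    (hlim2 : Tendsto (fun t => t ^ 2 * (J' t / J t)) (nhdsWithin 0 (Ioi 0)) (nhds 0))
    (hRic : ∀ t ∈ Ioc (0 : ℝ) R,
      (J'' t / J t - (J' t / J t) ^ 2) + (J' t / J t) ^ 2 / ((n : ℝ) - 1)
        + K₀ t + lam - f'' t ≤ 0) :
    ∀ r ∈ Ioc (0 : ℝ) R,
      J r * Real.exp (-f r) ≤ r ^ (n - 1) *
        Real.exp (-lam * r ^ 2 / 6 + f 0 - (2 / r) * (∫ t in (0 : ℝ)..r, f t)
          - (1 / r) * ∫ s in (0 : ℝ)..r, ∫ t in (0 : ℝ)..s, t * K₀ t) := by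
  have hn1 : (1:ℝ) ≤ (n:ℝ) - 1 := by
    have : (2:ℝ) ≤ (n:ℝ) := by exact_mod_cast hn
    linarith
  have hn0 : (0:ℝ) < (n:ℝ) - 1 := by linarith
  have hmcast : ((n - 1 : ℕ) : ℝ) = (n:ℝ) - 1 := by
    have : 1 ≤ n := by omega
    push_cast [this]; ring
  -- continuity of f, f'
  have hfc : ContinuousOn f (Icc 0 R) := fun t ht => ((hf t ht).continuousAt).continuousWithinAt
  have hf'c : ContinuousOn f' (Icc 0 R) := fun t ht => ((hf' t ht).continuousAt).continuousWithinAt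
  set G : ℝ → ℝ := fun t => f'' t - lam - K₀ t with hGdef
  have hGc : ContinuousOn G (Icc 0 R) := (hf''.sub continuousOn_const).sub hK
  set g2 : ℝ → ℝ := fun s => s ^ 2 * G s with hg2def
  set g1 : ℝ → ℝ := fun s => s * G s with hg1def
  have hg2c : ContinuousOn g2 (Icc 0 R) := (continuousOn_pow 2).mul hGc
  have hg1c : ContinuousOn g1 (Icc 0 R) := continuousOn_id.mul hGc
  set I2 : ℝ → ℝ := fun x => ∫ s in (0:ℝ)..x, g2 s with hI2def
  set I1 : ℝ → ℝ := fun x => ∫ s in (0:ℝ)..x, g1 s with hI1def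
  -- Step 1 : Riccati integrated once
  have C1 : ∀ r ∈ Ioc (0:ℝ) R, r ^ 2 * (J' r / J r) - ((n:ℝ) - 1) * r ≤ I2 r := by
    apply key_mono (fun t => t ^ 2 * (J' t / J t) - ((n:ℝ) - 1) * t) I2
      (fun t => 2 * t * (J' t / J t) + t ^ 2 * (J'' t / J t - (J' t / J t) ^ 2) - ((n:ℝ) - 1))
      (fun t => g2 t)
    · intro t ht
      have hJt := (hJ t ht).continuousAt
      have hJ't := (hJ' t ht).continuousAt
      have hne : J t ≠ 0 := (hJpos t ht).ne'
      exact ((((continuous_pow 2).continuousAt).mul (hJ't.div hJt hne)).sub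
        (continuousAt_const.mul continuousAt_id)).continuousWithinAt
    · exact (prim_contOn hR hg2c).mono Ioc_subset_Icc_self
    · intro t ht
      have ht' : t ∈ Ioc (0:ℝ) R := Ioo_subset_Ioc_self ht
      have hne : J t ≠ 0 := (hJpos t ht').ne'
      have hq : HasDerivAt (fun t => J' t / J t)
          ((J'' t * J t - J' t * J' t) / (J t) ^ 2) t := (hJ' t ht').div (hJ t ht') hne
      have h1 : HasDerivAt (fun t => t ^ 2 * (J' t / J t))
          (2 * t ^ 1 * (J' t / J t) + t ^ 2 * ((J'' t * J t - J' t * J' t) / (J t) ^ 2)) t := by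
        exact ((hasDerivAt_pow 2 t).mul hq).congr_deriv (by norm_num)
      have h2 : HasDerivAt (fun t => ((n:ℝ) - 1) * t) ((n:ℝ) - 1) t := by
        simpa using (hasDerivAt_id t).const_mul ((n:ℝ) - 1)
      have h3 := h1.sub h2
      refine h3.congr_deriv ?_
      field_simp
    · intro t ht
      exact prim_hasDerivAt hg2c ht
    · intro t ht
      have ht' : t ∈ Ioc (0:ℝ) R := Ioo_subset_Ioc_self ht
      have hric := hRic t ht'
      set u := J' t / J t
      have hkey : 2 * t * u - t ^ 2 * u ^ 2 / ((n:ℝ) - 1) ≤ (n:ℝ) - 1 := by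
        rw [sub_le_iff_le_add, ← sub_le_iff_le_add', le_div_iff₀ hn0]
        nlinarith [sq_nonneg (t * u - ((n:ℝ) - 1))]
      have hub : J'' t / J t - u ^ 2 ≤ G t - u ^ 2 / ((n:ℝ) - 1) := by
        simp only [hGdef]; linarith
      have ht2 : (0:ℝ) ≤ t ^ 2 := sq_nonneg t
      calc 2 * t * u + t ^ 2 * (J'' t / J t - u ^ 2) - ((n:ℝ) - 1)
          ≤ 2 * t * u + t ^ 2 * (G t - u ^ 2 / ((n:ℝ) - 1)) - ((n:ℝ) - 1) := by
            linarith [mul_le_mul_of_nonneg_left hub ht2]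
        _ ≤ g2 t := by
            simp only [hg2def]
            have hx : t ^ 2 * (u ^ 2 / ((n:ℝ) - 1)) = t ^ 2 * u ^ 2 / ((n:ℝ) - 1) := by ring
            have hy : t ^ 2 * (G t - u ^ 2 / ((n:ℝ) - 1)) = t ^ 2 * G t - t ^ 2 * (u ^ 2 / ((n:ℝ) - 1)) := by ring
            linarith [hkey]
    · -- limit
      have h1 : Tendsto I2 (nhdsWithin (0:ℝ) (Ioi 0)) (nhds 0) := prim_tendsto hR hg2c
      have h2 : Tendsto (fun t : ℝ => ((n:ℝ) - 1) * t) (nhdsWithin (0:ℝ) (Ioi 0)) (nhds 0) := by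
        have h0 : Tendsto (fun t : ℝ => ((n:ℝ) - 1) * t) (nhds 0) (nhds (((n:ℝ) - 1) * 0)) :=
          (continuous_const.mul continuous_id).tendsto 0
        simpa using h0.mono_left nhdsWithin_le_nhds
      have h3 := (h1.sub (hlim2.sub h2))
      simpa using h3
  -- Step 2 : integrate again
  have C2 : ∀ r ∈ Ioc (0:ℝ) R,
      Real.log (J r) - ((n:ℝ) - 1) * Real.log r ≤ I1 r - r⁻¹ * I2 r := by
    apply key_mono _ _ (fun t => J' t / J t - ((n:ℝ) - 1) / t) (fun t => (t ^ 2)⁻¹ * I2 t)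
    · intro t ht
      have hJt := (hJ t ht).continuousAt
      have h1 : ContinuousAt (fun t => Real.log (J t)) t :=
        (Real.continuousAt_log (hJpos t ht).ne').comp hJt
      have h2 : ContinuousAt (fun t => ((n:ℝ) - 1) * Real.log t) t :=
        continuousAt_const.mul (Real.continuousAt_log ht.1.ne')
      exact (h1.sub h2).continuousWithinAt
    · apply ContinuousOn.sub ((prim_contOn hR hg1c).mono Ioc_subset_Icc_self)
      exact (ContinuousOn.inv₀ continuousOn_id (fun t ht => ht.1.ne')).mul
        ((prim_contOn hR hg2c).mono Ioc_subset_Icc_self)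
    · intro t ht
      have ht' := Ioo_subset_Ioc_self ht
      have h1 : HasDerivAt (fun t => Real.log (J t)) (J' t / J t) t :=
        (hJ t ht').log (hJpos t ht').ne'
      have h2 : HasDerivAt (fun t => ((n:ℝ) - 1) * Real.log t) (((n:ℝ) - 1) * t⁻¹) t :=
        (Real.hasDerivAt_log ht.1.ne').const_mul _
      exact (h1.sub h2).congr_deriv (by ring)
    · intro t ht
      have h1 : HasDerivAt I1 (g1 t) t := prim_hasDerivAt hg1c ht
      have h2 : HasDerivAt I2 (g2 t) t := prim_hasDerivAt hg2c ht
      have h3 : HasDerivAt (fun t : ℝ => t⁻¹) (-(t ^ 2)⁻¹) t := by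
        simpa using hasDerivAt_inv ht.1.ne'
      refine (h1.sub (h3.mul h2)).congr_deriv ?_
      simp only [hg1def, hg2def]
      have hne : t ≠ 0 := ht.1.ne'
      field_simp
      ring
    · intro t ht
      have ht' := Ioo_subset_Ioc_self ht
      have h := C1 t ht'
      have ht0 : (0:ℝ) < t := ht.1
      have hne : t ≠ 0 := ht0.ne'
      have ht2 : (0:ℝ) < t ^ 2 := pow_pos ht0 2
      have e1 : J' t / J t - ((n:ℝ) - 1) / t
          = (t ^ 2 * (J' t / J t) - ((n:ℝ) - 1) * t) / t ^ 2 := by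
        field_simp
      have e2 : (t ^ 2)⁻¹ * I2 t = I2 t / t ^ 2 := by field_simp
      rw [e1, e2]
      exact div_le_div_of_nonneg_right h ht2.le
    · -- limit
      obtain ⟨M, hM⟩ := (isCompact_Icc (a := (0:ℝ)) (b := R)).exists_bound_of_continuousOn hGc
      have hM0 : 0 ≤ M := le_trans (norm_nonneg _) (hM 0 ⟨le_refl 0, hR.le⟩)
      have hI1t : Tendsto I1 (nhdsWithin (0:ℝ) (Ioi 0)) (nhds 0) := prim_tendsto hR hg1c
      have hinv : Tendsto (fun t => t⁻¹ * I2 t) (nhdsWithin (0:ℝ) (Ioi 0)) (nhds 0) := by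
        apply squeeze_zero_norm' (a := fun t => t ^ 2 * M)
        · filter_upwards [Ioc_mem_nhdsGT_of_mem
            (by exact ⟨le_refl 0, hR⟩ : (0:ℝ) ∈ Ico 0 R)] with t ht
          have ht0 : 0 < t := ht.1
          have hb : ‖I2 t‖ ≤ t ^ 2 * M * |t - 0| := by
            apply intervalIntegral.norm_integral_le_of_norm_le_const
            intro x hx
            rw [uIoc_of_le ht0.le] at hx
            have hx1 : 0 < x := hx.1
            have hx2 : x ≤ t := hx.2
            have hxI : x ∈ Icc (0:ℝ) R := ⟨hx1.le, hx2.trans ht.2⟩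
            have : ‖g2 x‖ = x ^ 2 * ‖G x‖ := by
              simp only [hg2def]
              rw [norm_mul, norm_pow, Real.norm_eq_abs, abs_of_nonneg hx1.le]
            rw [this]
            have : x ^ 2 ≤ t ^ 2 := by nlinarith
            nlinarith [hM x hxI, norm_nonneg (G x)]
          rw [norm_mul, norm_inv, Real.norm_eq_abs, abs_of_nonneg ht0.le]
          rw [sub_zero, abs_of_nonneg ht0.le] at hb
          calc t⁻¹ * ‖I2 t‖ ≤ t⁻¹ * (t ^ 2 * M * t) := by
                exact mul_le_mul_of_nonneg_left hb (inv_nonneg.mpr ht0.le)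
            _ = t ^ 2 * M := by
                field_simp
                try ring
        · have : Tendsto (fun t : ℝ => t ^ 2 * M) (nhds 0) (nhds (0 ^ 2 * M)) :=
            ((continuous_pow 2).mul continuous_const).tendsto 0
          simpa using this.mono_left nhdsWithin_le_nhds
      have hphi : Tendsto (fun t => Real.log (J t) - ((n:ℝ) - 1) * Real.log t)
          (nhdsWithin (0:ℝ) (Ioi 0)) (nhds 0) := by
        have hlog : Tendsto (fun r => Real.log (J r / r ^ (n - 1)))
            (nhdsWithin (0:ℝ) (Ioi 0)) (nhds 0) := by
          have h := (Real.continuousAt_log one_ne_zero).tendsto.comp hlim1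
          rwa [Real.log_one] at h
        apply hlog.congr'
        filter_upwards [Ioc_mem_nhdsGT_of_mem
          (by exact ⟨le_refl 0, hR⟩ : (0:ℝ) ∈ Ico 0 R)] with t ht
        have ht0 : 0 < t := ht.1
        rw [Real.log_div (hJpos t ht).ne' (by positivity), Real.log_pow, hmcast]
      have := (hI1t.sub hinv).sub hphi
      simp only [sub_zero] at this
      convert this using 2
  -- Step 3 : explicit identity for the double integral
  set F : ℝ → ℝ := fun x => ∫ t in (0:ℝ)..x, f t with hFdef
  set gK : ℝ → ℝ := fun t => t * K₀ t with hgKdef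
  have hgKc : ContinuousOn gK (Icc 0 R) := continuousOn_id.mul hK
  set IK : ℝ → ℝ := fun x => ∫ t in (0:ℝ)..x, gK t with hIKdef
  have hIKc : ContinuousOn IK (Icc 0 R) := prim_contOn hR hgKc
  set DK : ℝ → ℝ := fun x => ∫ s in (0:ℝ)..x, IK s with hDKdef
  have hFc : ContinuousOn F (Icc 0 R) := prim_contOn hR hfc
  have hDKc : ContinuousOn DK (Icc 0 R) := prim_contOn hR hIKc
  have hI1eq : ∀ r ∈ Ioc (0:ℝ) R,
      I1 r = r * f' r - f r + f 0 - lam * r ^ 2 / 2 - IK r := by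
    intro r hr
    have hsub : uIcc (0:ℝ) r ⊆ Icc 0 R := by
      rw [uIcc_of_le hr.1.le]; exact Icc_subset_Icc le_rfl hr.2
    have hintf'' : IntervalIntegrable (fun x => x * f'' x) volume 0 r :=
      ((continuousOn_id.mul hf'').mono hsub).intervalIntegrable
    have hintlam : IntervalIntegrable (fun x : ℝ => x * lam) volume 0 r :=
      (continuous_id.mul continuous_const).intervalIntegrable _ _
    have hintK : IntervalIntegrable gK volume 0 r := ((hgKc.mono hsub)).intervalIntegrable
    have hsplit : I1 r = (∫ x in (0:ℝ)..r, x * f'' x) - (∫ x in (0:ℝ)..r, x * lam)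
        - (∫ x in (0:ℝ)..r, gK x) := by
      rw [hI1def]
      rw [← intervalIntegral.integral_sub hintf'' hintlam,
          ← intervalIntegral.integral_sub (hintf''.sub hintlam) hintK]
      apply intervalIntegral.integral_congr
      intro x hx
      simp only [hg1def, hGdef, hgKdef]
      ring
    have hibp : (∫ x in (0:ℝ)..r, x * f'' x)
        = r * f' r - 0 * f' 0 - ∫ x in (0:ℝ)..r, 1 * f' x := by
      refine intervalIntegral.integral_mul_deriv_eq_deriv_mul
        (u := fun x => x) (u' := fun _ => (1:ℝ)) (v := f') (v' := f'') ?_ ?_ ?_ ?_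
      · intro x hx; exact hasDerivAt_id x
      · intro x hx; exact hf' x (hsub hx)
      · exact intervalIntegrable_const
      · exact ((hf''.mono hsub)).intervalIntegrable
    have hfint : (∫ x in (0:ℝ)..r, f' x) = f r - f 0 :=
      intervalIntegral.integral_eq_sub_of_hasDerivAt (fun x hx => hf x (hsub hx))
        (((hf'c.mono hsub)).intervalIntegrable)
    have h1f : (∫ x in (0:ℝ)..r, 1 * f' x) = f r - f 0 := by
      simp only [one_mul]; exact hfint
    have hlamint : (∫ x in (0:ℝ)..r, x * lam) = lam * r ^ 2 / 2 := by
      rw [intervalIntegral.integral_mul_const, integral_id]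
      ring
    rw [hsplit, hibp, h1f, hlamint, hIKdef]
    ring
  have hαd : ∀ t ∈ Ioo (0:ℝ) R, HasDerivAt (fun x => x * I1 x - I2 x) (I1 t) t := by
    intro t ht
    have h1 : HasDerivAt I1 (g1 t) t := prim_hasDerivAt hg1c ht
    have h2 : HasDerivAt I2 (g2 t) t := prim_hasDerivAt hg2c ht
    refine (((hasDerivAt_id t).mul h1).sub h2).congr_deriv ?_
    simp only [hg1def, hg2def, id_eq]
    ring
  have hβd : ∀ t ∈ Ioo (0:ℝ) R, HasDerivAt
      (fun x => x * f x + x * f 0 - 2 * F x - lam * x ^ 3 / 6 - DK x) (I1 t) t := by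
    intro t ht
    have htI : t ∈ Icc (0:ℝ) R := Ioo_subset_Icc_self ht
    have h1 := (hasDerivAt_id t).mul (hf t htI)
    have h2 : HasDerivAt (fun x : ℝ => x * f 0) (f 0) t := by
      simpa using (hasDerivAt_id t).mul_const (f 0)
    have h3 : HasDerivAt F (f t) t := prim_hasDerivAt hfc ht
    have h4 : HasDerivAt (fun x : ℝ => lam * x ^ 3 / 6) (lam * (3 * t ^ 2) / 6) t := by
      have := ((hasDerivAt_pow 3 t).const_mul lam).div_const 6
      simpa using this
    have h5 : HasDerivAt DK (IK t) t := prim_hasDerivAt hIKc ht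
    refine ((((h1.add h2).sub (h3.const_mul 2)).sub h4).sub h5).congr_deriv ?_
    rw [hI1eq t (Ioo_subset_Ioc_self ht)]
    simp only [id_eq]
    ring
  have hαc : ContinuousOn (fun x => x * I1 x - I2 x) (Ioc 0 R) :=
    ((continuousOn_id.mul (prim_contOn hR hg1c)).sub (prim_contOn hR hg2c)).mono
      Ioc_subset_Icc_self
  have hβc : ContinuousOn
      (fun x => x * f x + x * f 0 - 2 * F x - lam * x ^ 3 / 6 - DK x) (Ioc 0 R) := by
    apply ContinuousOn.mono _ (Ioc_subset_Icc_self (a := (0:ℝ)) (b := R))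
    apply ContinuousOn.sub
    apply ContinuousOn.sub
    apply ContinuousOn.sub
    · exact (continuousOn_id.mul hfc).add (continuousOn_id.mul continuousOn_const)
    · exact continuousOn_const.mul hFc
    · exact ((continuous_const.mul (continuous_pow 3)).div_const 6).continuousOn
    · exact hDKc
  have hid0 : Tendsto (fun x : ℝ => x) (nhdsWithin 0 (Ioi 0)) (nhds 0) :=
    (continuous_id.tendsto 0).mono_left nhdsWithin_le_nhds
  have hαlim : Tendsto (fun x => x * I1 x - I2 x) (nhdsWithin (0:ℝ) (Ioi 0)) (nhds 0) := by
    have := (hid0.mul (prim_tendsto hR hg1c)).sub (prim_tendsto hR hg2c)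
    simpa using this
  have hβlim : Tendsto (fun x => x * f x + x * f 0 - 2 * F x - lam * x ^ 3 / 6 - DK x)
      (nhdsWithin (0:ℝ) (Ioi 0)) (nhds 0) := by
    have hf0 : Tendsto f (nhdsWithin (0:ℝ) (Ioi 0)) (nhds (f 0)) :=
      ((hfc 0 ⟨le_refl 0, hR.le⟩).tendsto).mono_left (nhds_le hR)
    have h1 := hid0.mul hf0
    have h2 : Tendsto (fun x : ℝ => x * f 0) (nhdsWithin (0:ℝ) (Ioi 0)) (nhds 0) := by
      simpa using hid0.mul_const (f 0)
    have h3 := prim_tendsto hR hfc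
    have h4 : Tendsto (fun x : ℝ => lam * x ^ 3 / 6) (nhdsWithin (0:ℝ) (Ioi 0)) (nhds 0) := by
      have hc : Continuous (fun x : ℝ => lam * x ^ 3 / 6) :=
        (continuous_const.mul (continuous_pow 3)).div_const 6
      have := (hc.tendsto 0).mono_left (nhdsWithin_le_nhds (s := Ioi (0:ℝ)))
      simpa using this
    have h5 := prim_tendsto hR hIKc
    have := (((h1.add h2).sub (h3.const_mul 2)).sub h4).sub h5
    simpa using this
  have ID : ∀ r ∈ Ioc (0:ℝ) R, r * I1 r - I2 r
      = r * f r + r * f 0 - 2 * F r - lam * r ^ 3 / 6 - DK r := by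
    intro r hr
    apply le_antisymm
    · exact key_mono _ _ (fun t => I1 t) (fun t => I1 t) hαc hβc hαd hβd
        (fun t _ => le_refl _) (by simpa using hβlim.sub hαlim) r hr
    · exact key_mono _ _ (fun t => I1 t) (fun t => I1 t) hβc hαc hβd hαd
        (fun t _ => le_refl _) (by simpa using hαlim.sub hβlim) r hr
  -- Final assembly
  intro r hr
  have hr0 : 0 < r := hr.1
  have hrne : r ≠ 0 := hr0.ne'
  have hC2 := C2 r hr
  have hID := ID r hr
  have hE : I1 r - r⁻¹ * I2 r
      = f r + f 0 - (2 / r) * F r - lam * r ^ 2 / 6 - (1 / r) * DK r := by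
    have e1 : I1 r - r⁻¹ * I2 r = r⁻¹ * (r * I1 r - I2 r) := by
      field_simp
    rw [e1, hID]
    field_simp
    try ring
  have hkey : Real.log (J r) - f r ≤ ((n:ℝ) - 1) * Real.log r
      + (-lam * r ^ 2 / 6 + f 0 - (2 / r) * F r - (1 / r) * DK r) := by
    rw [hE] at hC2
    linarith
  have hJr : 0 < J r := hJpos r hr
  have hFr : F r = ∫ t in (0:ℝ)..r, f t := by rw [hFdef]
  have hDKr : DK r = ∫ s in (0:ℝ)..r, ∫ t in (0:ℝ)..s, t * K₀ t := by
    rw [hDKdef]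
  have hlhs : J r * Real.exp (-f r) = Real.exp (Real.log (J r) - f r) := by
    rw [Real.exp_sub, Real.exp_log hJr, Real.exp_neg, div_eq_mul_inv]
  have hrhs : (r : ℝ) ^ (n - 1) * Real.exp (-lam * r ^ 2 / 6 + f 0 - (2 / r) * F r
        - (1 / r) * DK r)
      = Real.exp (((n:ℝ) - 1) * Real.log r
        + (-lam * r ^ 2 / 6 + f 0 - (2 / r) * F r - (1 / r) * DK r)) := by
    rw [Real.exp_add]
    congr 1
    rw [← hmcast, ← Real.log_pow, Real.exp_log (pow_pos hr0 _)]
  calc J r * Real.exp (-f r) = Real.exp (Real.log (J r) - f r) := hlhs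
    _ ≤ Real.exp (((n:ℝ) - 1) * Real.log r
        + (-lam * r ^ 2 / 6 + f 0 - (2 / r) * F r - (1 / r) * DK r)) :=
      Real.exp_le_exp.mpr hkey
    _ = r ^ (n - 1) * Real.exp (-lam * r ^ 2 / 6 + f 0 - (2 / r) * F r - (1 / r) * DK r) :=
      hrhs.symm
    _ = _ := by rw [hFr, hDKr]
end
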